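/- Let U ⊆ ℂ be an open connected set and let f : U → ℝ² = ℂ be a nonconstant conformal harmonic map. Then either f is holomorphic on U or the complex conjugate map z ↦ conj(f(z)) is holomorphic on U. -/

import Mathlib

private lemma cr_diffAt {f : ℂ → ℂ} {z : ℂ} (hd : DifferentiableAt ℝ f z)
    (hcr : fderiv ℝ f z Complex.I = Complex.I * fderiv ℝ f z 1) :
    DifferentiableAt ℂ f z := by
  set L := fderiv ℝ f z with hLdef
  set L' : ℂ →L[ℂ] ℂ := (ContinuousLinearMap.id ℂ ℂ).smulRight (L 1) with hL'def
  have hres : (L'.restrictScalars ℝ) = L := by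
    ext w
    have hw : (w : ℂ) = w.re • (1:ℂ) + w.im • Complex.I := by
      simp [Complex.real_smul, Complex.re_add_im]
    have : L w = w.re • L 1 + w.im • L Complex.I := by
      conv_lhs => rw [hw]
      rw [map_add, map_smul, map_smul]
    rw [ContinuousLinearMap.coe_restrictScalars']
    show w • L 1 = L w
    rw [this, hcr, smul_eq_mul, Complex.real_smul, Complex.real_smul]
    conv_lhs => rw [← Complex.re_add_im w]
    ring
  have h1 : HasFDerivAt f (L'.restrictScalars ℝ) z := hres ▸ hd.hasFDerivAt
  exact ⟨L', .of_isLittleO h1.isLittleO⟩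

private lemma cr_diffOn {f : ℂ → ℂ} {U : Set ℂ}
    (hd : ∀ z ∈ U, DifferentiableAt ℝ f z)
    (hcr : ∀ z ∈ U, fderiv ℝ f z Complex.I = Complex.I * fderiv ℝ f z 1) :
    DifferentiableOn ℂ f U :=
  fun z hz => (cr_diffAt (hd z hz) (hcr z hz)).differentiableWithinAt

theorem conformalHarmonic_plane_holomorphic_or_antiholomorphic
    (U : Set ℂ) (hU : IsOpen U) (hUconn : IsConnected U)
    (f : ℂ → ℂ) (hf : ContDiffOn ℝ 2 f U)
    (hconf : ∀ z ∈ U,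
        (fderiv ℝ f z 1).re * (fderiv ℝ f z Complex.I).re
          + (fderiv ℝ f z 1).im * (fderiv ℝ f z Complex.I).im = 0 ∧
        ‖fderiv ℝ f z 1‖ = ‖fderiv ℝ f z Complex.I‖)
    (hharm : ∀ z ∈ U, fderiv ℝ (fun w => fderiv ℝ f w 1) z 1
        + fderiv ℝ (fun w => fderiv ℝ f w Complex.I) z Complex.I = 0)
    (hnc : ∃ z ∈ U, ∃ w ∈ U, f z ≠ f w) :
    DifferentiableOn ℂ f U ∨
      DifferentiableOn ℂ (fun z => starRingEnd ℂ (f z)) U := by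
  clear hnc
  set F : ℂ → ℂ →L[ℝ] ℂ := fderiv ℝ f with hFdef
  have hfd : ∀ z ∈ U, DifferentiableAt ℝ f z := fun z hz =>
    (hf.differentiableOn two_ne_zero).differentiableAt (hU.mem_nhds hz)
  have hF1 : ContDiffOn ℝ 1 F U := hf.fderiv_of_isOpen hU (by norm_num)
  have hFd : ∀ z ∈ U, DifferentiableAt ℝ F z := fun z hz =>
    (hF1.differentiableOn one_ne_zero).differentiableAt (hU.mem_nhds hz)
  have hFz : ∀ z ∈ U, HasFDerivAt F (fderiv ℝ F z) z := fun z hz => (hFd z hz).hasFDerivAt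
  -- symmetry of second derivative
  have hsymm : ∀ z ∈ U, ∀ v w : ℂ, fderiv ℝ F z v w = fderiv ℝ F z w v := by
    intro z hz v w
    exact second_derivative_symmetric_of_eventually
      (Filter.eventually_of_mem (hU.mem_nhds hz) fun y hy => (hfd y hy).hasFDerivAt)
      (hFz z hz) v w
  -- derivatives of coordinate applications
  have happ : ∀ (v : ℂ), ∀ z ∈ U, HasFDerivAt (fun w => F w v)
      ((ContinuousLinearMap.apply ℝ ℂ v).comp (fderiv ℝ F z)) z := fun v z hz =>
    (ContinuousLinearMap.apply ℝ ℂ v).hasFDerivAt.comp z (hFz z hz)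
  have e1 : ∀ z ∈ U, ∀ v w : ℂ, fderiv ℝ (fun y => F y v) z w = fderiv ℝ F z w v := by
    intro z hz v w
    rw [(happ v z hz).fderiv]; rfl
  -- harmonicity in second-derivative form
  have hharm' : ∀ z ∈ U, fderiv ℝ F z 1 1 + fderiv ℝ F z Complex.I Complex.I = 0 := by
    intro z hz
    have := hharm z hz
    rwa [show (fun w => fderiv ℝ f w 1) = fun y => F y 1 from rfl,
      show (fun w => fderiv ℝ f w Complex.I) = fun y => F y Complex.I from rfl,
      e1 z hz 1 1, e1 z hz Complex.I Complex.I] at this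
  -- the functions g = ∂f/∂x - i ∂f/∂y  and  hb = conj(∂f/∂x + i ∂f/∂y)
  set g : ℂ → ℂ := fun z => F z 1 - Complex.I * F z Complex.I with hgdef
  set k : ℂ → ℂ := fun z => F z 1 + Complex.I * F z Complex.I with hkdef
  set hb : ℂ → ℂ := fun z => (starRingEnd ℂ) (k z) with hbdef
  have hg' : ∀ z ∈ U, HasFDerivAt g
      (((ContinuousLinearMap.apply ℝ ℂ 1).comp (fderiv ℝ F z))
        - Complex.I • ((ContinuousLinearMap.apply ℝ ℂ Complex.I).comp (fderiv ℝ F z))) z :=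
    fun z hz => (happ 1 z hz).sub ((happ Complex.I z hz).const_mul Complex.I)
  have hk' : ∀ z ∈ U, HasFDerivAt k
      (((ContinuousLinearMap.apply ℝ ℂ 1).comp (fderiv ℝ F z))
        + Complex.I • ((ContinuousLinearMap.apply ℝ ℂ Complex.I).comp (fderiv ℝ F z))) z :=
    fun z hz => (happ 1 z hz).add ((happ Complex.I z hz).const_mul Complex.I)
  have hb' : ∀ z ∈ U, HasFDerivAt hb
      ((Complex.conjCLE.toContinuousLinearMap).comp
        (((ContinuousLinearMap.apply ℝ ℂ 1).comp (fderiv ℝ F z))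
        + Complex.I • ((ContinuousLinearMap.apply ℝ ℂ Complex.I).comp (fderiv ℝ F z)))) z := by
    intro z hz
    have h := (Complex.conjCLE.toContinuousLinearMap.hasFDerivAt).comp z (hk' z hz)
    have : hb = (Complex.conjCLE.toContinuousLinearMap) ∘ k := by
      funext w; simp [hbdef, Function.comp]
    rwa [this]
  -- CR equations for g and hb
  have hgcr : ∀ z ∈ U, fderiv ℝ g z Complex.I = Complex.I * fderiv ℝ g z 1 := by
    intro z hz
    rw [(hg' z hz).fderiv]
    simp only [ContinuousLinearMap.sub_apply, ContinuousLinearMap.smul_apply,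
      ContinuousLinearMap.comp_apply, ContinuousLinearMap.apply_apply, smul_eq_mul]
    linear_combination hsymm z hz Complex.I 1 - Complex.I * hharm' z hz
      + (fderiv ℝ F z 1 Complex.I) * Complex.I_sq
  have hbcr : ∀ z ∈ U, fderiv ℝ hb z Complex.I = Complex.I * fderiv ℝ hb z 1 := by
    intro z hz
    rw [(hb' z hz).fderiv]
    simp only [ContinuousLinearMap.comp_apply, ContinuousLinearMap.add_apply,
      ContinuousLinearMap.smul_apply, ContinuousLinearMap.apply_apply, smul_eq_mul,
      ContinuousLinearEquiv.coe_coe, Complex.conjCLE_apply, map_add, map_mul, Complex.conj_I]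
    have h1 : (starRingEnd ℂ) (fderiv ℝ F z Complex.I 1)
        = (starRingEnd ℂ) (fderiv ℝ F z 1 Complex.I) := by
      rw [hsymm z hz Complex.I 1]
    have h2 : (starRingEnd ℂ) (fderiv ℝ F z 1 1)
        + (starRingEnd ℂ) (fderiv ℝ F z Complex.I Complex.I) = 0 := by
      rw [← map_add, hharm' z hz, map_zero]
    linear_combination h1 - Complex.I * h2
      + ((starRingEnd ℂ) (fderiv ℝ F z 1 Complex.I)) * Complex.I_sq
  -- pointwise dichotomy from conformality
  have hdich : ∀ z ∈ U, g z = 0 ∨ hb z = 0 := by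
    intro z hz
    obtain ⟨hA, hN⟩ := hconf z hz
    set p : ℂ := F z 1 with hp
    set q : ℂ := F z Complex.I with hq
    have hN' : p.re ^ 2 + p.im ^ 2 = q.re ^ 2 + q.im ^ 2 := by
      have h1 : ‖p‖ ^ 2 = ‖q‖ ^ 2 := by rw [hN]
      rw [Complex.sq_norm, Complex.sq_norm,
        Complex.normSq_apply, Complex.normSq_apply] at h1
      linear_combination h1
    have hsq : p ^ 2 + q ^ 2 = 0 := by
      by_cases hp0 : p = 0
      · have : q = 0 := by
          have : ‖q‖ = 0 := by rw [← hN, hp0, norm_zero]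
          exact norm_eq_zero.mp this
        rw [hp0, this]; ring
      · have hne : p.re ^ 2 + p.im ^ 2 ≠ 0 := by
          have := Complex.normSq_pos.mpr hp0
          rw [Complex.normSq_apply] at this
          nlinarith
        have key1 : (p.re ^ 2 + p.im ^ 2) * (p.re ^ 2 - p.im ^ 2 + q.re ^ 2 - q.im ^ 2) = 0 := by
          linear_combination (2 * (p.re * q.re - p.im * q.im)) * hA
            + (p.re ^ 2 - p.im ^ 2) * hN'
        have key2 : (p.re ^ 2 + p.im ^ 2) * (p.re * p.im + q.re * q.im) = 0 := by
          linear_combination (p.re * q.im + p.im * q.re) * hA + (p.re * p.im) * hN'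
        have h1 := (mul_eq_zero.mp key1).resolve_left hne
        have h2 := (mul_eq_zero.mp key2).resolve_left hne
        apply Complex.ext
        · simp only [Complex.add_re, Complex.add_im, pow_two, Complex.mul_re, Complex.mul_im,
            Complex.zero_re]
          nlinarith [h1]
        · simp only [Complex.add_im, pow_two, Complex.mul_im, Complex.zero_im]
          nlinarith [h2]
    have hmul : g z * k z = p ^ 2 + q ^ 2 := by
      simp only [hgdef, hkdef]
      linear_combination (-(q ^ 2)) * Complex.I_sq
    rcases mul_eq_zero.mp (hmul.trans hsq) with h | h
    · exact Or.inl h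
    · exact Or.inr (by simp [hbdef, h])
  -- g and hb are holomorphic
  have hgholo : DifferentiableOn ℂ g U :=
    cr_diffOn (fun z hz => (hg' z hz).differentiableAt) hgcr
  have hbholo : DifferentiableOn ℂ hb U :=
    cr_diffOn (fun z hz => (hb' z hz).differentiableAt) hbcr
  by_cases hg0 : ∀ z ∈ U, g z = 0
  · -- conj ∘ f is holomorphic
    right
    have hcf : ∀ z ∈ U, HasFDerivAt (fun w => (starRingEnd ℂ) (f w))
        ((Complex.conjCLE.toContinuousLinearMap).comp (F z)) z := by
      intro z hz
      have h := (Complex.conjCLE.toContinuousLinearMap.hasFDerivAt).comp z (hfd z hz).hasFDerivAt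
      have heq : (fun w => (starRingEnd ℂ) (f w)) = (Complex.conjCLE.toContinuousLinearMap) ∘ f := by
        funext w; simp [Function.comp]
      rwa [heq]
    apply cr_diffOn (fun z hz => (hcf z hz).differentiableAt)
    intro z hz
    rw [(hcf z hz).fderiv]
    simp only [ContinuousLinearMap.comp_apply, ContinuousLinearEquiv.coe_coe,
      Complex.conjCLE_apply]
    have hg0z : F z 1 - Complex.I * F z Complex.I = 0 := hg0 z hz
    have hpq : F z 1 = Complex.I * F z Complex.I := by linear_combination hg0z
    rw [hpq, map_mul, Complex.conj_I]
    ring_nf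
    rw [Complex.I_sq]
    ring
  · -- f is holomorphic
    left
    push_neg at hg0
    obtain ⟨z₀, hz₀U, hgz₀⟩ := hg0
    have hnb : hb =ᶠ[nhds z₀] 0 := by
      have hc : ContinuousAt g z₀ := (hg' z₀ hz₀U).differentiableAt.continuousAt
      filter_upwards [hc.eventually_ne hgz₀, hU.mem_nhds hz₀U] with w hw1 hw2
      exact (hdich w hw2).resolve_left hw1
    have hb0 : Set.EqOn hb 0 U :=
      (hbholo.analyticOnNhd hU).eqOn_zero_of_preconnected_of_eventuallyEq_zero
        hUconn.isPreconnected hz₀U hnb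
    apply cr_diffOn hfd
    intro z hz
    have hbz : k z = 0 := by
      have := hb0 hz
      simpa [hbdef] using this
    have hpq : F z 1 + Complex.I * F z Complex.I = 0 := hbz
    show F z Complex.I = Complex.I * F z 1
    linear_combination (-Complex.I) * hpq + (F z Complex.I) * Complex.I_sq
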